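/- If a vector x ∈ R^d satisfies ||x||_1 ≤ τ, then for any positive integer s, the l2-error of the best s-sparse approximation to x is at most τ/(2√s); that is, there exists an s-sparse vector y with ||x - y||_2 ≤ τ/(2√s). -/
import Mathlib


open Finset in
theorem best_sparse_approximation (d : ℕ) (x : Fin d → ℝ) (τ : ℝ) (hτ : 0 < τ)
    (hx : ∑ i, |x i| ≤ τ) (s : ℕ) (hs : 0 < s) :
    ∃ y : Fin d → ℝ, (Finset.univ.filter fun i => y i ≠ 0).card ≤ s ∧
      Real.sqrt (∑ i, (x i - y i) ^ 2) ≤ τ / (2 * Real.sqrt s) := by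
  have hsqrt_pos : 0 < Real.sqrt s := Real.sqrt_pos.mpr (by exact_mod_cast hs)
  have hrhs_nonneg : 0 ≤ τ / (2 * Real.sqrt s) := by positivity
  by_cases hd : s ≤ d
  · -- choose T maximizing head ℓ1 mass among subsets of card s
    have hne : (Finset.univ.powersetCard s : Finset (Finset (Fin d))).Nonempty := by
      rw [Finset.powersetCard_nonempty]
      simpa using hd
    obtain ⟨T, hTmem, hTmax⟩ := Finset.exists_max_image _ (fun T => ∑ i ∈ T, |x i|) hne
    rw [Finset.mem_powersetCard] at hTmem
    obtain ⟨-, hTcard⟩ := hTmem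
    set A := ∑ i ∈ T, |x i| with hA
    set B := ∑ i ∈ Tᶜ, |x i| with hB
    have hA0 : 0 ≤ A := Finset.sum_nonneg fun i _ => abs_nonneg _
    have hB0 : 0 ≤ B := Finset.sum_nonneg fun i _ => abs_nonneg _
    have hAB : A + B ≤ τ := by
      rw [hA, hB, Finset.sum_add_sum_compl]; exact hx
    -- every coordinate outside T is dominated by each coordinate in T
    have hswap : ∀ i ∈ Tᶜ, ∀ j ∈ T, |x i| ≤ |x j| := by
      intro i hi j hj
      rw [Finset.mem_compl] at hi
      have hi' : i ∉ T.erase j := fun h => hi (Finset.mem_of_mem_erase h)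
      have hcard : (insert i (T.erase j)).card = s := by
        rw [Finset.card_insert_of_notMem hi', Finset.card_erase_of_mem hj, hTcard]
        omega
      have := hTmax (insert i (T.erase j))
        (Finset.mem_powersetCard.mpr ⟨Finset.subset_univ _, hcard⟩)
      rw [Finset.sum_insert hi'] at this
      have herase : ∑ k ∈ T.erase j, |x k| = A - |x j| := by
        rw [hA, ← Finset.add_sum_erase T _ hj]; ring
      rw [herase] at this
      linarith
    -- hence each tail coordinate is ≤ A / s
    have htail : ∀ i ∈ Tᶜ, |x i| ≤ A / s := by
      intro i hi
      have h1 : T.card • |x i| ≤ ∑ j ∈ T, |x j| :=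
        Finset.card_nsmul_le_sum T _ _ (fun j hj => hswap i hi j hj)
      rw [hTcard, nsmul_eq_mul] at h1
      have hspos : (0:ℝ) < s := by exact_mod_cast hs
      rw [le_div_iff₀ hspos, mul_comm]
      exact h1
    refine ⟨fun i => if i ∈ T then x i else 0, ?_, ?_⟩
    · refine le_trans (Finset.card_le_card ?_) (le_of_eq hTcard)
      intro i hi
      simp only [Finset.mem_filter] at hi
      by_contra h
      exact hi.2 (by simp [h])
    · have hE : ∑ i, (x i - (if i ∈ T then x i else 0)) ^ 2 = ∑ i ∈ Tᶜ, (x i) ^ 2 := by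
        rw [← Finset.sum_add_sum_compl T fun i => (x i - (if i ∈ T then x i else 0)) ^ 2]
        have h1 : ∑ i ∈ T, (x i - (if i ∈ T then x i else 0)) ^ 2 = 0 :=
          Finset.sum_eq_zero fun i hi => by simp [hi]
        have h2 : ∑ i ∈ Tᶜ, (x i - (if i ∈ T then x i else 0)) ^ 2
            = ∑ i ∈ Tᶜ, (x i) ^ 2 :=
          Finset.sum_congr rfl fun i hi => by
            have hn : i ∉ T := Finset.mem_compl.mp hi
            simp [hn]
        rw [h1, h2, zero_add]
      rw [hE]
      have hE2 : ∑ i ∈ Tᶜ, (x i) ^ 2 ≤ (A / s) * B := by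
        rw [hB, Finset.mul_sum]
        refine Finset.sum_le_sum fun i hi => ?_
        have habs : (x i)^2 = |x i| * |x i| := by rw [abs_mul_abs_self]; ring
        rw [habs]
        exact mul_le_mul_of_nonneg_right (htail i hi) (abs_nonneg _)
      have hE3 : (A / s) * B ≤ τ^2 / (4 * s) := by
        have hspos : (0:ℝ) < s := by exact_mod_cast hs
        have key : A * B ≤ τ^2 / 4 := by
          nlinarith [sq_nonneg (A - B),
            mul_nonneg (by linarith : (0:ℝ) ≤ τ - (A + B)) (by linarith : (0:ℝ) ≤ τ + (A + B))]
        calc (A / s) * B = (A * B) / s := by ring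
          _ ≤ (τ^2 / 4) / s := by gcongr
          _ = τ^2 / (4 * s) := by ring
      have hsq : (τ / (2 * Real.sqrt s))^2 = τ^2 / (4 * s) := by
        rw [div_pow, mul_pow, Real.sq_sqrt (by positivity : (0:ℝ) ≤ (s:ℝ))]
        norm_num
      calc Real.sqrt (∑ i ∈ Tᶜ, (x i)^2)
          ≤ Real.sqrt ((τ / (2 * Real.sqrt s))^2) := by
            apply Real.sqrt_le_sqrt; rw [hsq]; linarith
        _ = τ / (2 * Real.sqrt s) := Real.sqrt_sq hrhs_nonneg
  · -- d < s : take y = x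
    refine ⟨x, ?_, ?_⟩
    · exact le_trans (Finset.card_filter_le _ _) (by simp; omega)
    · simp [Real.sqrt_eq_zero', hrhs_nonneg]
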